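/- arXiv:2109.11184 — 5 statements merged into one kernel-verified Lean document; each statement's English description precedes it below -/
import Mathlib

section
/- For an algebraic number α with minimal polynomial f(x) = a_n x^n + ... + a_0 over ℤ factoring as a_n(x-α_1)...(x-α_n) over ℂ, the Mahler measure M(α) = |a_n| ∏ max(1,|α_i|) satisfies M(α) ≥ 1, and M(α) = 1 if and only if α = 0 or α is a root of unity. -/
open Polynomial

noncomputable def intMinpoly (α : ℂ) : Polynomial ℤ :=
  (IsLocalization.integerNormalization (nonZeroDivisors ℤ) (minpoly ℚ α)).primPart

noncomputable def mahlerM (α : ℂ) : ℝ :=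
  ((intMinpoly α).leadingCoeff.natAbs : ℝ) *
    (((intMinpoly α).map (Int.castRingHom ℂ)).roots.map (fun z => max 1 ‖z‖)).prod

noncomputable def mahlerC (α : ℂ) : ℂ := (mahlerM α : ℝ)

def TorsionFree (α : ℂ) : Prop :=
  ∀ σ : ℂ ≃ₐ[ℚ] ℂ, σ α ≠ α → ∀ n : ℕ, 0 < n → (α / σ α) ^ n ≠ 1

/-! ### Auxiliary lemmas -/

open IntermediateField

lemma intMinpoly_ne_zero' (α : ℂ) : intMinpoly α ≠ 0 := Polynomial.primPart_ne_zero _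

lemma intMinpoly_lc_ne_zero (α : ℂ) : (intMinpoly α).leadingCoeff ≠ 0 :=
  leadingCoeff_ne_zero.mpr (intMinpoly_ne_zero' α)

lemma intMinpoly_map_eq (α : ℂ) (hα : IsAlgebraic ℚ α) :
    (intMinpoly α).map (Int.castRingHom ℚ) =
      C ((intMinpoly α).leadingCoeff : ℚ) * minpoly ℚ α := by
  set q := minpoly ℚ α with hqdef
  have hq : q ≠ 0 := minpoly.ne_zero hα.isIntegral
  set N := IsLocalization.integerNormalization (nonZeroDivisors ℤ) q with hN
  have hN0 : N ≠ 0 := fun h0 => hq (IsFractionRing.integerNormalization_eq_zero_iff.mp h0)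
  obtain ⟨b, hb⟩ := IsLocalization.integerNormalization_map_to_map (nonZeroDivisors ℤ) q
  have hbne : (b : ℤ) ≠ 0 := nonZeroDivisors.coe_ne_zero b
  have hcont : N.content ≠ 0 := fun h => hN0 (content_eq_zero_iff.mp h)
  have hdec := N.eq_C_content_mul_primPart
  have hip : intMinpoly α = N.primPart := rfl
  have hmap : C ((N.content : ℚ)) * (intMinpoly α).map (Int.castRingHom ℚ)
      = C ((b : ℤ) : ℚ) * q := by
    have : N.map (algebraMap ℤ ℚ) = ((b : ℤ) : ℚ) • q := by
      rw [hb]; ext i; simp [coeff_smul, zsmul_eq_mul]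
    calc C ((N.content : ℚ)) * (intMinpoly α).map (Int.castRingHom ℚ)
        = (C N.content * (intMinpoly α)).map (Int.castRingHom ℚ) := by
          rw [Polynomial.map_mul, map_C]; rfl
      _ = N.map (algebraMap ℤ ℚ) := by rw [hip, ← hdec]; rfl
      _ = C ((b : ℤ) : ℚ) * q := by rw [this, smul_eq_C_mul]
  have hcontQ : ((N.content : ℚ)) ≠ 0 := by exact_mod_cast hcont
  have key : (intMinpoly α).map (Int.castRingHom ℚ)
      = C (((b : ℤ) : ℚ) / (N.content : ℚ)) * q := by
    apply mul_left_cancel₀ (a := C ((N.content : ℚ))) (by simpa using hcontQ)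
    rw [hmap, ← mul_assoc, ← C_mul, mul_div_cancel₀ _ hcontQ]
  have hlc : ((intMinpoly α).leadingCoeff : ℚ) = ((b : ℤ) : ℚ) / (N.content : ℚ) := by
    have h1 : ((intMinpoly α).map (Int.castRingHom ℚ)).leadingCoeff
        = ((intMinpoly α).leadingCoeff : ℚ) := by
      rw [leadingCoeff_map_of_injective (fun a b h => by simpa using h)]; rfl
    have h2 : (C (((b : ℤ) : ℚ) / (N.content : ℚ)) * q).leadingCoeff
        = ((b : ℤ) : ℚ) / (N.content : ℚ) := by
      rw [leadingCoeff_mul, leadingCoeff_C, (minpoly.monic hα.isIntegral).leadingCoeff, mul_one]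
    rw [← h1, key, h2]
  rw [key, hlc]

lemma intMinpoly_mapC_eq (α : ℂ) (hα : IsAlgebraic ℚ α) :
    (intMinpoly α).map (Int.castRingHom ℂ) =
      C ((intMinpoly α).leadingCoeff : ℂ) * (minpoly ℚ α).map (algebraMap ℚ ℂ) := by
  have : (Int.castRingHom ℂ) = (algebraMap ℚ ℂ).comp (Int.castRingHom ℚ) := by
    ext1; simp
  rw [this, ← Polynomial.map_map, intMinpoly_map_eq α hα, Polynomial.map_mul, map_C]
  norm_num

lemma intMinpoly_roots_eq (α : ℂ) (hα : IsAlgebraic ℚ α) :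
    ((intMinpoly α).map (Int.castRingHom ℂ)).roots
      = ((minpoly ℚ α).map (algebraMap ℚ ℂ)).roots := by
  rw [intMinpoly_mapC_eq α hα, roots_C_mul]
  exact_mod_cast intMinpoly_lc_ne_zero α

lemma intMinpoly_aeval (α : ℂ) (hα : IsAlgebraic ℚ α) :
    eval₂ (Int.castRingHom ℂ) α (intMinpoly α) = 0 := by
  rw [← eval_map, intMinpoly_mapC_eq α hα]
  simp [eval_map, ← aeval_def, minpoly.aeval]

lemma intMinpoly_lc_natAbs_of_isIntegral (α : ℂ) (hα : IsAlgebraic ℚ α)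
    (h : IsIntegral ℤ α) : (intMinpoly α).leadingCoeff.natAbs = 1 := by
  have hQ : minpoly ℚ α = (minpoly ℤ α).map (algebraMap ℤ ℚ) :=
    minpoly.isIntegrallyClosed_eq_field_fractions ℚ ℂ h
  have key : (intMinpoly α).map (Int.castRingHom ℚ)
      = (C ((intMinpoly α).leadingCoeff) * minpoly ℤ α).map (Int.castRingHom ℚ) := by
    rw [intMinpoly_map_eq α hα, hQ, Polynomial.map_mul, map_C]; rfl
  have hinj : Function.Injective (Int.castRingHom ℚ) := fun a b hab => by simpa using hab
  have := Polynomial.map_injective _ hinj key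
  have hcont := congrArg Polynomial.content this
  have hp : (intMinpoly α).content = 1 := Polynomial.content_primPart _
  rw [content_C_mul, (minpoly.monic h).isPrimitive.content_eq_one, mul_one, hp] at hcont
  rcases Int.isUnit_iff.mp (normalize_eq_one.mp hcont.symm) with h1 | h1 <;> rw [h1] <;> rfl

lemma isIntegral_of_lc_natAbs (α : ℂ) (hα : IsAlgebraic ℚ α)
    (h : (intMinpoly α).leadingCoeff.natAbs = 1) : IsIntegral ℤ α := by
  rcases Int.natAbs_eq_iff.mp h with h1 | h1
  · exact ⟨intMinpoly α, by rwa [Polynomial.Monic, h1] at *,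
      by rw [algebraMap_int_eq]; exact intMinpoly_aeval α hα⟩
  · refine ⟨-(intMinpoly α), ?_, ?_⟩
    · rw [Polynomial.Monic, leadingCoeff_neg, h1]; norm_num
    · rw [eval₂_neg, algebraMap_int_eq, intMinpoly_aeval α hα, neg_zero]

/-! ### Multiset lemmas -/

lemma ms_norm_prod (s : Multiset ℂ) : ‖s.prod‖ = (s.map (fun z => ‖z‖)).prod := by
  induction s using Multiset.induction_on with
  | empty => simp
  | cons a t ih => simp [norm_mul, ih]

lemma ms_one_le_prod (s : Multiset ℝ) (h : ∀ x ∈ s, 1 ≤ x) : 1 ≤ s.prod := by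
  induction s using Multiset.induction_on with
  | empty => simp
  | cons a t ih =>
    rw [Multiset.prod_cons]
    have ha := h a (Multiset.mem_cons_self a t)
    have ht := ih (fun x hx => h x (Multiset.mem_cons_of_mem hx))
    nlinarith

lemma ms_prod_le_one (s : Multiset ℝ) (h : ∀ x ∈ s, 0 ≤ x ∧ x ≤ 1) : s.prod ≤ 1 ∧ 0 ≤ s.prod := by
  induction s using Multiset.induction_on with
  | empty => simp
  | cons a t ih =>
    rw [Multiset.prod_cons]
    have ha := h a (Multiset.mem_cons_self a t)
    have ht := ih (fun x hx => h x (Multiset.mem_cons_of_mem hx))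
    constructor <;> nlinarith [ha.1, ha.2, ht.1, ht.2]

lemma ms_all_eq_one_of_le (s : Multiset ℝ) (h : ∀ x ∈ s, 0 ≤ x ∧ x ≤ 1)
    (hp : 1 ≤ s.prod) : ∀ x ∈ s, x = 1 := by
  induction s using Multiset.induction_on with
  | empty => simp
  | cons a t ih =>
    rw [Multiset.prod_cons] at hp
    have ha := h a (Multiset.mem_cons_self a t)
    have ht' : ∀ x ∈ t, 0 ≤ x ∧ x ≤ 1 := fun x hx => h x (Multiset.mem_cons_of_mem hx)
    have ht := ms_prod_le_one t ht'
    have ha1 : a = 1 := by nlinarith [ha.1, ha.2, ht.1, ht.2]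
    intro x hx
    rcases Multiset.mem_cons.mp hx with rfl | hx
    · exact ha1
    · exact ih ht' (by nlinarith [ht.1, ht.2]) x hx

lemma ms_all_eq_one_of_ge (s : Multiset ℝ) (h : ∀ x ∈ s, 1 ≤ x)
    (hp : s.prod ≤ 1) : ∀ x ∈ s, x = 1 := by
  induction s using Multiset.induction_on with
  | empty => simp
  | cons a t ih =>
    rw [Multiset.prod_cons] at hp
    have ha := h a (Multiset.mem_cons_self a t)
    have ht' : ∀ x ∈ t, 1 ≤ x := fun x hx => h x (Multiset.mem_cons_of_mem hx)
    have ht := ms_one_le_prod t ht'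
    have ha1 : a = 1 := by nlinarith
    intro x hx
    rcases Multiset.mem_cons.mp hx with rfl | hx
    · exact ha1
    · exact ih ht' (by nlinarith) x hx

theorem mahler_ge_one_and_eq_one_iff (α : ℂ) (hα : IsAlgebraic ℚ α) :
    1 ≤ mahlerM α ∧
      (mahlerM α = 1 ↔ α = 0 ∨ ∃ n : ℕ, 0 < n ∧ α ^ n = 1) := by
  have hq0 : minpoly ℚ α ≠ 0 := minpoly.ne_zero hα.isIntegral
  set p := intMinpoly α with hpdef
  set f := p.map (Int.castRingHom ℂ) with hfdef
  set A : ℝ := (p.leadingCoeff.natAbs : ℝ) with hAdef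
  set R : ℝ := (f.roots.map (fun z => max 1 ‖z‖)).prod with hRdef
  have hmm : mahlerM α = A * R := rfl
  have hAge : (1 : ℝ) ≤ A := by
    have : 1 ≤ p.leadingCoeff.natAbs := Nat.one_le_iff_ne_zero.mpr
      (fun h => intMinpoly_lc_ne_zero α (Int.natAbs_eq_zero.mp h))
    rw [hAdef]
    exact_mod_cast this
  have hmem_ge : ∀ x ∈ f.roots.map (fun z => max 1 ‖z‖), (1 : ℝ) ≤ x := by
    intro x hx
    obtain ⟨z, _, rfl⟩ := Multiset.mem_map.mp hx
    exact le_max_left _ _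
  have hRge : (1 : ℝ) ≤ R := ms_one_le_prod _ hmem_ge
  refine ⟨by rw [hmm]; nlinarith, ?_, ?_⟩
  · -- forward direction
    intro hm
    rw [hmm] at hm
    have hA1 : A = 1 := by nlinarith
    have hR1 : R = 1 := by nlinarith
    have hroots_le : ∀ z ∈ f.roots, ‖z‖ ≤ 1 := by
      intro z hz
      have := ms_all_eq_one_of_ge _ hmem_ge hR1.le (max 1 ‖z‖)
        (Multiset.mem_map_of_mem _ hz)
      exact le_of_max_le_right this.le
    by_cases h0 : α = 0
    · exact Or.inl h0
    right
    have hnatAbs1 : p.leadingCoeff.natAbs = 1 := by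
      have := hA1; rw [hAdef] at this; exact_mod_cast this
    have hint : IsIntegral ℤ α := isIntegral_of_lc_natAbs α hα hnatAbs1
    -- constant coefficient is nonzero
    have ha0 : p.coeff 0 ≠ 0 := by
      intro hc
      have hXdvd : X ∣ minpoly ℚ α := by
        rw [X_dvd_iff]
        have : (p.map (Int.castRingHom ℚ)).coeff 0 = 0 := by simp [hc]
        rw [intMinpoly_map_eq α hα] at this
        simpa [coeff_C_mul, intMinpoly_lc_ne_zero α] using this
      have hirr := minpoly.irreducible hα.isIntegral
      obtain ⟨c, hcq⟩ := hXdvd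
      rcases hirr.isUnit_or_isUnit hcq with hu | hu
      · exact not_isUnit_X hu
      · obtain ⟨u, hu0, rfl⟩ := isUnit_iff.mp hu
        have : minpoly ℚ α = X * C u := hcq
        have hu1 : u = 1 := by
          have := congrArg leadingCoeff this
          rwa [(minpoly.monic hα.isIntegral).leadingCoeff, leadingCoeff_mul, leadingCoeff_X,
            leadingCoeff_C, one_mul, eq_comm] at this
        have hqX : minpoly ℚ α = X := by rw [this, hu1]; simp
        have := minpoly.aeval ℚ α
        rw [hqX, aeval_X] at this
        exact h0 this
    -- all roots have norm exactly 1
    have hf0 : f ≠ 0 := by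
      intro h
      exact intMinpoly_ne_zero' α (Polynomial.map_injective (Int.castRingHom ℂ)
        (fun a b hab => by simpa using hab) (by simpa using h))
    have hsplit : f = C f.leadingCoeff * (f.roots.map fun a => X - C a).prod :=
      (IsAlgClosed.splits f).eq_prod_roots
    have heval0 : ‖f.eval 0‖ = ‖f.leadingCoeff‖ * (f.roots.map (fun z => ‖z‖)).prod := by
      conv_lhs => rw [hsplit]
      rw [eval_mul, eval_C, norm_mul, eval_multiset_prod, Multiset.map_map, ms_norm_prod,
        Multiset.map_map]
      exact congrArg (‖f.leadingCoeff‖ * ·)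
        (congrArg Multiset.prod (Multiset.map_congr rfl (fun z _ => by simp)))
    have hflc : ‖f.leadingCoeff‖ = 1 := by
      have h1 : f.leadingCoeff = (p.leadingCoeff : ℂ) := by
        rw [hfdef, leadingCoeff_map_of_injective (fun a b h => by simpa using h)]; rfl
      rw [h1, Complex.norm_intCast, ← Int.cast_abs, Int.abs_eq_natAbs, hnatAbs1]
      norm_num
    have heval0' : f.eval 0 = ((p.coeff 0 : ℤ) : ℂ) := by
      rw [hfdef, eval_map, eval₂_at_zero]; rfl
    have hge1 : (1 : ℝ) ≤ (f.roots.map (fun z => ‖z‖)).prod := by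
      have h1 : (1 : ℝ) ≤ ‖f.eval 0‖ := by
        rw [heval0', Complex.norm_intCast]
        exact_mod_cast Int.one_le_abs ha0
      rw [heval0, hflc, one_mul] at h1
      exact h1
    have hroots_eq : ∀ z ∈ f.roots, ‖z‖ = 1 := by
      intro z hz
      exact ms_all_eq_one_of_le _
        (by
          intro x hx
          obtain ⟨w, hw, rfl⟩ := Multiset.mem_map.mp hx
          exact ⟨norm_nonneg w, hroots_le w hw⟩)
        hge1 ‖z‖ (Multiset.mem_map_of_mem _ hz)
    -- Kronecker's theorem via number field embeddings
    have hfin : FiniteDimensional ℚ ℚ⟮α⟯ :=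
      IntermediateField.adjoin.finiteDimensional hα.isIntegral
    letI : NumberField ℚ⟮α⟯ := ⟨⟩
    set x := IntermediateField.AdjoinSimple.gen ℚ α with hxdef
    have hxα : algebraMap ℚ⟮α⟯ ℂ x = α := IntermediateField.AdjoinSimple.algebraMap_gen ℚ α
    have hxi : IsIntegral ℤ x :=
      (isIntegral_algebraMap_iff (algebraMap ℚ⟮α⟯ ℂ).injective).mp (by rwa [hxα])
    have hnorm : ∀ φ : ℚ⟮α⟯ →+* ℂ, ‖φ x‖ = 1 := by
      intro φ
      have h1 : aeval x (minpoly ℚ α) = 0 := IntermediateField.aeval_gen_minpoly ℚ α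
      have h2 : aeval (φ x) (minpoly ℚ α) = 0 := by
        have := Polynomial.aeval_algHom_apply φ.toRatAlgHom x (minpoly ℚ α)
        rw [h1, map_zero] at this
        exact this
      have hzmem : φ x ∈ ((minpoly ℚ α).map (algebraMap ℚ ℂ)).roots := by
        rw [mem_roots (Polynomial.map_ne_zero hq0)]
        rw [IsRoot, eval_map, ← aeval_def, h2]
      rw [← intMinpoly_roots_eq α hα] at hzmem
      exact hroots_eq _ hzmem
    obtain ⟨n, hn, hxn⟩ := NumberField.Embeddings.pow_eq_one_of_norm_eq_one ℚ⟮α⟯ ℂ hxi hnorm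
    exact ⟨n, hn, by rw [← hxα, ← map_pow, hxn, map_one]⟩
  · -- backward direction
    intro h
    have hint : IsIntegral ℤ α := by
      rcases h with rfl | ⟨n, hn, hαn⟩
      · exact isIntegral_zero
      · exact ⟨X ^ n - 1, monic_X_pow_sub_C 1 hn.ne', by
          simp [eval₂_sub, hαn]⟩
    have hA1 : A = 1 := by
      rw [hAdef, intMinpoly_lc_natAbs_of_isIntegral α hα hint]; norm_num
    have hall : ∀ z ∈ f.roots, ‖z‖ ≤ 1 := by
      intro z hz
      rw [hfdef, intMinpoly_roots_eq α hα] at hz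
      rcases h with rfl | ⟨n, hn, hαn⟩
      · -- α = 0 : minpoly is X, root is 0
        have hq : minpoly ℚ (0 : ℂ) = X := minpoly.zero ℚ ℂ
        rw [hq] at hz
        simp at hz
        simp [hz]
      · -- root of unity
        have hdvd : minpoly ℚ α ∣ X ^ n - 1 := minpoly.dvd ℚ α (by
          simp [hαn])
        have hne : ((X ^ n - 1 : ℚ[X]).map (algebraMap ℚ ℂ)) ≠ 0 :=
          Polynomial.map_ne_zero ((monic_X_pow_sub_C (1 : ℚ) hn.ne').ne_zero)
        have hz' : z ∈ ((X ^ n - 1 : ℚ[X]).map (algebraMap ℚ ℂ)).roots :=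
          Multiset.mem_of_le (Polynomial.roots.le_of_dvd hne (Polynomial.map_dvd _ hdvd)) hz
        have hzn : z ^ n = 1 := by
          have h2 := (mem_roots hne).mp hz'
          rw [IsRoot, eval_map] at h2
          simp [eval₂_sub] at h2
          linear_combination h2
        have hpow : ‖z‖ ^ n = 1 := by rw [← norm_pow, hzn, norm_one]
        by_contra h1
        push_neg at h1
        nlinarith [one_lt_pow₀ h1 hn.ne']
    have hR1 : R = 1 := by
      rw [hRdef]
      apply Multiset.prod_eq_one
      intro x hx
      obtain ⟨z, hz, rfl⟩ := Multiset.mem_map.mp hx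
      exact max_eq_left (hall z hz)
    rw [hmm, hA1, hR1, one_mul]
end

section
/- An algebraic number α is torsion-free if and only if [ℚ(α^n):ℚ] = [ℚ(α):ℚ] for every positive integer n. -/
open Polynomial

open Cardinal IntermediateField in
set_option maxHeartbeats 2000000 in
set_option synthInstance.maxHeartbeats 1000000 in

lemma exists_algEquiv_ext (K : IntermediateField ℚ ℂ) [FiniteDimensional ℚ K]
    (φ : K →ₐ[ℚ] ℂ) : ∃ σ : ℂ ≃ₐ[ℚ] ℂ, ∀ x : K, σ x = φ x := by
  classical
  set K' : IntermediateField ℚ ℂ := φ.fieldRange with hK'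
  let e : K ≃ₐ[ℚ] K' := AlgEquiv.ofInjectiveField φ
  obtain ⟨s, hv⟩ := exists_isTranscendenceBasis (R := ↥K) (A := ℂ)
  obtain ⟨t, hw⟩ := exists_isTranscendenceBasis (R := ↥K') (A := ℂ)
  have hKcard : #K ≤ ℵ₀ := by
    have : Algebra.IsAlgebraic ℚ K := Algebra.IsAlgebraic.of_finite ℚ K
    refine (Algebra.IsAlgebraic.cardinalMk_le_max ℚ K).trans ?_
    simp [Cardinal.mkRat]
  have hK'card : #K' ≤ ℵ₀ := by
    rw [← Cardinal.mk_congr e.toEquiv]; exact hKcard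
  have hCc : ℵ₀ < #ℂ := by rw [mk_complex]; exact aleph0_lt_continuum
  have hs : #ℂ = #s :=
    by simpa using IsAlgClosed.cardinal_eq_cardinal_transcendence_basis_of_aleph0_lt _ hv hKcard hCc
  have ht : #ℂ = #t :=
    by simpa using IsAlgClosed.cardinal_eq_cardinal_transcendence_basis_of_aleph0_lt _ hw hK'card hCc
  obtain ⟨b⟩ : Nonempty ((s : Set ℂ) ≃ (t : Set ℂ)) := Cardinal.eq.mp (hs ▸ ht)
  letI i1 : IsAlgClosure (Algebra.adjoin K (Set.range ((↑) : s → ℂ))) ℂ :=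
    IsAlgClosed.isAlgClosure_of_transcendence_basis _ hv
  letI i2 : IsAlgClosure (Algebra.adjoin K' (Set.range ((↑) : t → ℂ))) ℂ :=
    IsAlgClosed.isAlgClosure_of_transcendence_basis _ hw
  let f1 := hv.1.aevalEquiv.symm.toRingEquiv
  let f2 := (MvPolynomial.renameEquiv K b).toRingEquiv
  let f3 := MvPolynomial.mapEquiv (σ := t) e.toRingEquiv
  let f4 := hw.1.aevalEquiv.toRingEquiv
  let hSR := f1.trans (f2.trans (f3.trans f4))
  let σ₀ := IsAlgClosure.equivOfEquiv ℂ ℂ hSR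
  have key : ∀ y, σ₀ (algebraMap (Algebra.adjoin K (Set.range ((↑) : s → ℂ))) ℂ y)
      = algebraMap (Algebra.adjoin K' (Set.range ((↑) : t → ℂ))) ℂ (hSR y) :=
    fun y => IsAlgClosure.equivOfEquiv_algebraMap ℂ ℂ hSR y
  have hcomm : ∀ q : ℚ, σ₀ (algebraMap ℚ ℂ q) = algebraMap ℚ ℂ q := by
    intro q
    rw [eq_ratCast (algebraMap ℚ ℂ), map_ratCast]
  refine ⟨AlgEquiv.ofRingEquiv hcomm, ?_⟩
  intro x
  have hx : (x : ℂ) = algebraMap (Algebra.adjoin K (Set.range ((↑) : s → ℂ))) ℂ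
      (algebraMap K (Algebra.adjoin K (Set.range ((↑) : s → ℂ))) x) := rfl
  have hval : hSR (algebraMap K (Algebra.adjoin K (Set.range ((↑) : s → ℂ))) x)
      = algebraMap K' (Algebra.adjoin K' (Set.range ((↑) : t → ℂ))) (e x) := by
    show f4 (f3 (f2 (f1 _))) = _
    have h1 : f1 (algebraMap K _ x) = MvPolynomial.C x := by
      show hv.1.aevalEquiv.symm (algebraMap K _ x) = _
      rw [AlgEquiv.commutes]; rfl
    rw [h1]
    have h2 : f2 (MvPolynomial.C x) = MvPolynomial.C x := by
      simp [f2]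
    rw [h2]
    have h3 : f3 (MvPolynomial.C x) = MvPolynomial.C (e x) := by
      simp [f3, MvPolynomial.mapEquiv_apply]
    rw [h3]
    show hw.1.aevalEquiv (MvPolynomial.C (e x)) = _
    rw [show (MvPolynomial.C (e x) : MvPolynomial t K') = algebraMap K' _ (e x) from rfl,
      AlgEquiv.commutes]
  show σ₀ (x : ℂ) = φ x
  rw [hx, key, hval]
  rfl

open Cardinal IntermediateField in
set_option maxHeartbeats 2000000 in
set_option synthInstance.maxHeartbeats 1000000 in

private lemma main_aux (α : ℂ) (hα : IsAlgebraic ℚ α)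
    (ext : ∀ (K : IntermediateField ℚ ℂ) [FiniteDimensional ℚ K] (φ : K →ₐ[ℚ] ℂ),
      ∃ σ : ℂ ≃ₐ[ℚ] ℂ, ∀ x : K, σ x = φ x) :
    (∀ σ : ℂ ≃ₐ[ℚ] ℂ, σ α ≠ α → ∀ n : ℕ, 0 < n → (α / σ α) ^ n ≠ 1) ↔
      ∀ n : ℕ, 0 < n →
        Module.finrank ℚ (IntermediateField.adjoin ℚ {α ^ n} : IntermediateField ℚ ℂ) =
          Module.finrank ℚ (IntermediateField.adjoin ℚ {α} : IntermediateField ℚ ℂ) := by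
  have hint : IsIntegral ℚ α := hα.isIntegral
  haveI : FiniteDimensional ℚ (adjoin ℚ {α} : IntermediateField ℚ ℂ) :=
    adjoin.finiteDimensional hint
  constructor
  · intro hTF n hn
    by_cases h0 : α = 0
    · rw [h0, zero_pow hn.ne']
    have hintn : IsIntegral ℚ (α ^ n) := hint.pow n
    haveI hFD : FiniteDimensional ℚ (adjoin ℚ {α ^ n} : IntermediateField ℚ ℂ) :=
      adjoin.finiteDimensional hintn
    set F : IntermediateField ℚ ℂ := adjoin ℚ {α ^ n} with hF
    have hintF : IsIntegral F α := hint.tower_top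
    have hmem : α ∈ F := by
      set p := minpoly F α with hp
      have hd1 : p.natDegree = 1 := by
        by_contra hne
        have hd2 : 2 ≤ p.natDegree := by
          have hpos : 0 < p.natDegree := minpoly.natDegree_pos hintF
          omega
        -- roots
        have hsplit : Splits (p.map (algebraMap F ℂ)) := IsAlgClosed.splits _
        have hcard : (p.map (algebraMap F ℂ)).roots.card = p.natDegree :=
          by rw [← hsplit.natDegree_eq_card_roots, Polynomial.natDegree_map]
        have hpne : p.map (algebraMap F ℂ) ≠ 0 :=
          Polynomial.map_ne_zero (minpoly.ne_zero hintF)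
        have hsep : (p.map (algebraMap F ℂ)).Separable :=
          ((minpoly.irreducible hintF).separable).map
        have hnodup : (p.map (algebraMap F ℂ)).roots.Nodup :=
          Polynomial.nodup_roots hsep
        have hαroot : α ∈ (p.map (algebraMap F ℂ)).roots := by
          rw [Polynomial.mem_roots hpne, Polynomial.IsRoot, Polynomial.eval_map,
            ← Polynomial.aeval_def]
          exact minpoly.aeval F α
        obtain ⟨β, hβmem, hβne⟩ : ∃ β ∈ (p.map (algebraMap F ℂ)).roots, β ≠ α := by
          by_contra hall
          push_neg at hall
          have : (p.map (algebraMap F ℂ)).roots.count α =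
              (p.map (algebraMap F ℂ)).roots.card :=
            Multiset.count_eq_card.mpr (fun b hb => (hall b hb).symm)
          have := Multiset.nodup_iff_count_le_one.mp hnodup α
          omega
        -- β^n = α^n
        have hx' : (α ^ n) ∈ F := mem_adjoin_simple_self ℚ (α ^ n)
        have hdvd : p ∣ (X ^ n - C (⟨α ^ n, hx'⟩ : F)) := by
          apply minpoly.dvd
          simp
        have hβpow : β ^ n = α ^ n := by
          have hroot : Polynomial.aeval β p = 0 := by
            have := (Polynomial.mem_roots hpne).mp hβmem
            rwa [Polynomial.IsRoot, Polynomial.eval_map, ← Polynomial.aeval_def] at this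
          obtain ⟨q, hq⟩ := hdvd
          have : Polynomial.aeval β (X ^ n - C (⟨α ^ n, hx'⟩ : F)) = 0 := by
            rw [hq, map_mul, hroot, zero_mul]
          simpa [sub_eq_zero] using this
        -- embedding
        have hβroots : β ∈ (minpoly F α).aroots ℂ := by rwa [Polynomial.aroots_def]
        let ψ : F⟮α⟯ →ₐ[F] ℂ :=
          (IntermediateField.algHomAdjoinIntegralEquiv F hintF).symm ⟨β, hβroots⟩
        have hψgen : ψ (AdjoinSimple.gen F α) = β :=
          IntermediateField.algHomAdjoinIntegralEquiv_symm_apply_gen F hintF ⟨β, hβroots⟩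
        haveI : FiniteDimensional F F⟮α⟯ := adjoin.finiteDimensional hintF
        haveI : FiniteDimensional ℚ (F⟮α⟯.restrictScalars ℚ) :=
          FiniteDimensional.trans ℚ F F⟮α⟯
        obtain ⟨σ, hσ⟩ := ext (F⟮α⟯.restrictScalars ℚ) (ψ.restrictScalars ℚ)
        have hσα : σ α = β := by
          have h2 : σ α = ψ (AdjoinSimple.gen F α) := by
            exact hσ (show F⟮α⟯.restrictScalars ℚ from AdjoinSimple.gen F α)
          exact h2.trans hψgen
        have hβ0 : β ≠ 0 := by
          intro hz
          rw [hz, zero_pow hn.ne'] at hβpow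
          exact h0 (pow_eq_zero_iff hn.ne' |>.mp hβpow.symm)
        refine hTF σ (by rw [hσα]; exact hβne) n hn ?_
        rw [hσα, div_pow, hβpow, div_self (pow_ne_zero n h0)]
      obtain ⟨y, hy⟩ := minpoly.natDegree_eq_one_iff.mp hd1
      rw [← hy]
      exact y.2
    have hle : F ≤ adjoin ℚ {α} := by
      rw [hF]
      exact adjoin_le_iff.mpr (by
        simp only [Set.singleton_subset_iff, SetLike.mem_coe]
        exact pow_mem (mem_adjoin_simple_self ℚ α) n)
    have hge : adjoin ℚ {α} ≤ F :=
      adjoin_le_iff.mpr (by simpa using hmem)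
    rw [le_antisymm hle hge]
  · intro h σ hσ n hn hpow
    have h0 : α ≠ 0 := by
      rintro rfl
      exact hσ (map_zero σ)
    have hσ0 : σ α ≠ 0 := fun hz => h0 (σ.injective (by rw [hz, map_zero]))
    have hpn : (σ α) ^ n = α ^ n := by
      rw [div_pow, div_eq_one_iff_eq (pow_ne_zero n hσ0)] at hpow
      exact hpow.symm
    have hintn : IsIntegral ℚ (α ^ n) := hint.pow n
    haveI : FiniteDimensional ℚ (adjoin ℚ {α ^ n} : IntermediateField ℚ ℂ) :=
      adjoin.finiteDimensional hintn
    have hFeq : (adjoin ℚ {α ^ n} : IntermediateField ℚ ℂ) = adjoin ℚ {α} :=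
      IntermediateField.eq_of_le_of_finrank_eq
        (adjoin_le_iff.mpr (by
          simp only [Set.singleton_subset_iff, SetLike.mem_coe]
          exact pow_mem (mem_adjoin_simple_self ℚ α) n)) (h n hn)
    have hmem : α ∈ (adjoin ℚ {α ^ n} : IntermediateField ℚ ℂ) := by
      rw [hFeq]; exact mem_adjoin_simple_self ℚ α
    have hmem' : α ∈ Algebra.adjoin ℚ ({α ^ n} : Set ℂ) := by
      rwa [← adjoin_simple_toSubalgebra_of_isAlgebraic hintn.isAlgebraic]
    rw [Algebra.adjoin_singleton_eq_range_aeval] at hmem'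
    obtain ⟨q, hq0⟩ := hmem'
    have hq : Polynomial.aeval (α ^ n) q = α := hq0
    apply hσ
    calc σ α = σ (Polynomial.aeval (α ^ n) q) := by rw [hq]
    _ = Polynomial.aeval (σ (α ^ n)) q := (Polynomial.aeval_algHom_apply σ.toAlgHom (α ^ n) q).symm
    _ = Polynomial.aeval (α ^ n) q := by rw [map_pow, hpn]
    _ = α := hq

theorem torsionFree_iff_degree_pow_eq (α : ℂ) (hα : IsAlgebraic ℚ α) :
    TorsionFree α ↔
      ∀ n : ℕ, 0 < n →
        Module.finrank ℚ (IntermediateField.adjoin ℚ {α ^ n} : IntermediateField ℚ ℂ) =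
          Module.finrank ℚ (IntermediateField.adjoin ℚ {α} : IntermediateField ℚ ℂ) :=
  main_aux α hα (fun K _ φ => exists_algEquiv_ext K φ)
end

section
/- Let K be a totally real quartic number field with non-trivial real embeddings σ₁, σ₂, σ₃. Then there exists an algebraic unit α ∈ K such that |α| > |σ₁(α)| > 1, |σ₂(α)| < 1, |σ₃(α)| < 1, and |α·σ_i(α)| ≠ 1 for all i ∈ {1,2,3}. -/
set_option maxHeartbeats 1600000
open NumberField NumberField.InfinitePlace


lemma choose_mn (a0 a1 a2 a3 b0 b1 b2 b3 : ℝ)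
    (ha : a0 + a1 + a2 + a3 = 0) (hb : b0 + b1 + b2 + b3 = 0)
    (ha1 : a1 < 0) (ha2 : a2 < 0) (ha3 : a3 < 0)
    (hb0 : b0 < 0) (hb2 : b2 < 0) (hb3 : b3 < 0) :
    ∃ m n : ℕ, 0 < m ∧ 0 < n ∧
      0 < m * a1 + n * b1 ∧ m * a1 + n * b1 < m * a0 + n * b0 ∧
      (m * a0 + n * b0) + (m * a2 + n * b2) ≠ 0 ∧
      (m * a0 + n * b0) + (m * a3 + n * b3) ≠ 0 := by
  have ha0 : 0 < a0 := by nlinarith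
  have hb1 : 0 < b1 := by nlinarith
  have ha01 : 0 < a0 - a1 := by linarith
  have ha02 : 0 < a0 + a2 := by nlinarith
  have ha03 : 0 < a0 + a3 := by nlinarith
  have hna1 : 0 < -a1 := by linarith
  set A : ℝ := b1 / (-a1) with hA
  set B : ℝ := max ((b1 - b0) / (a0 - a1)) 0 with hB
  have hApos : 0 < A := div_pos hb1 hna1
  have hBA : B < A := by
    rw [hB, max_lt_iff]
    refine ⟨?_, hApos⟩
    rw [div_lt_div_iff₀ ha01 hna1]
    nlinarith
  obtain ⟨q1, hq1B, hq1A⟩ := exists_rat_btwn hBA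
  obtain ⟨q2, hq2l, hq2A⟩ := exists_rat_btwn hq1A
  obtain ⟨q3, hq3l, hq3A⟩ := exists_rat_btwn hq2A
  set r2 : ℝ := -(b0 + b2) / (a0 + a2) with hr2
  set r3 : ℝ := -(b0 + b3) / (a0 + a3) with hr3
  have key : ∃ q : ℚ, B < (q:ℝ) ∧ (q:ℝ) < A ∧ (q:ℝ) ≠ r2 ∧ (q:ℝ) ≠ r3 := by
    by_cases h1 : (q1:ℝ) ≠ r2 ∧ (q1:ℝ) ≠ r3
    · exact ⟨q1, hq1B, hq1A, h1.1, h1.2⟩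
    · by_cases h2 : (q2:ℝ) ≠ r2 ∧ (q2:ℝ) ≠ r3
      · exact ⟨q2, lt_trans hq1B hq2l, hq2A, h2.1, h2.2⟩
      · have H1 : (q1:ℝ) = r2 ∨ (q1:ℝ) = r3 := by
          by_contra hc; push_neg at hc; exact h1 ⟨hc.1, hc.2⟩
        have H2 : (q2:ℝ) = r2 ∨ (q2:ℝ) = r3 := by
          by_contra hc; push_neg at hc; exact h2 ⟨hc.1, hc.2⟩
        refine ⟨q3, lt_trans hq1B (lt_trans hq2l hq3l), hq3A, ?_, ?_⟩ <;>
          · intro hq3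
            rcases H1 with h | h <;> rcases H2 with h' | h' <;> linarith
  obtain ⟨q, hqB, hqA, hqr2, hqr3⟩ := key
  have hq0 : (0:ℝ) < (q:ℝ) := lt_of_le_of_lt (le_max_right _ _) hqB
  have hqpos : 0 < q := by exact_mod_cast hq0
  obtain ⟨m, hm'⟩ : ∃ m : ℕ, (m:ℤ) = q.num :=
    ⟨q.num.toNat, Int.toNat_of_nonneg (le_of_lt (Rat.num_pos.mpr hqpos))⟩
  set n := q.den with hn
  have hmpos : 0 < m := by
    have : (0:ℤ) < (m:ℤ) := hm' ▸ Rat.num_pos.mpr hqpos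
    exact_mod_cast this
  have hden : (0:ℝ) < (n:ℝ) := by exact_mod_cast q.pos
  have hm : (m:ℝ) = (q:ℝ) * (n:ℝ) := by
    have h1 : ((q.num:ℝ)) = (q:ℝ) * (q.den:ℝ) := by
      rw [Rat.cast_def]; field_simp
    rw [show ((m:ℕ):ℝ) = ((m:ℤ):ℝ) by push_cast; ring, hm', h1]
  have hx : (q:ℝ) * (-a1) < b1 := by
    rw [hA, lt_div_iff₀ hna1] at hqA; linarith
  have hy : b1 - b0 < (q:ℝ) * (a0 - a1) := by
    have h2 : (b1 - b0) / (a0 - a1) < (q:ℝ) := lt_of_le_of_lt (le_max_left _ _) hqB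
    rw [div_lt_iff₀ ha01] at h2; linarith
  refine ⟨m, n, hmpos, q.pos, ?_, ?_, ?_, ?_⟩
  · rw [hm]
    have := mul_pos (show (0:ℝ) < (q:ℝ)*a1 + b1 by linarith) hden
    nlinarith [this]
  · rw [hm]
    have := mul_pos (show (0:ℝ) < (q:ℝ)*(a0-a1) - (b1-b0) by linarith) hden
    nlinarith [this]
  · rw [hm]
    intro h
    have h' : ((q:ℝ)*(a0+a2) + (b0+b2)) * n = 0 := by linear_combination h
    have h'' : (q:ℝ)*(a0+a2) + (b0+b2) = 0 :=
      (mul_eq_zero.mp h').resolve_right (ne_of_gt hden)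
    apply hqr2
    rw [hr2, eq_div_iff (ne_of_gt ha02)]
    linarith
  · rw [hm]
    intro h
    have h' : ((q:ℝ)*(a0+a3) + (b0+b3)) * n = 0 := by linear_combination h
    have h'' : (q:ℝ)*(a0+a3) + (b0+b3) = 0 :=
      (mul_eq_zero.mp h').resolve_right (ne_of_gt hden)
    apply hqr3
    rw [hr3, eq_div_iff (ne_of_gt ha03)]
    linarith

theorem exists_unit_totally_real_quartic (K : Subfield ℝ) [FiniteDimensional ℚ K]
    (h4 : Module.finrank ℚ K = 4)
    (σ₁ σ₂ σ₃ : K →+* ℝ)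
    (hne1 : σ₁ ≠ K.subtype) (hne2 : σ₂ ≠ K.subtype) (hne3 : σ₃ ≠ K.subtype)
    (h12 : σ₁ ≠ σ₂) (h13 : σ₁ ≠ σ₃) (h23 : σ₂ ≠ σ₃)
    (hall : ∀ φ : K →+* ℂ,
      φ = Complex.ofRealHom.comp K.subtype ∨ φ = Complex.ofRealHom.comp σ₁ ∨
        φ = Complex.ofRealHom.comp σ₂ ∨ φ = Complex.ofRealHom.comp σ₃) :
    ∃ α : K, α ≠ 0 ∧ IsIntegral ℤ α ∧ IsIntegral ℤ α⁻¹ ∧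
      |(α : ℝ)| > |σ₁ α| ∧ |σ₁ α| > 1 ∧ |σ₂ α| < 1 ∧ |σ₃ α| < 1 ∧
      |(α : ℝ) * σ₁ α| ≠ 1 ∧ |(α : ℝ) * σ₂ α| ≠ 1 ∧ |(α : ℝ) * σ₃ α| ≠ 1 := by
  haveI : NumberField K := ⟨⟩
  classical
  have hinj : ∀ σ τ : K →+* ℝ, Complex.ofRealHom.comp σ = Complex.ofRealHom.comp τ → σ = τ := by
    intro σ τ h; ext x
    have := RingHom.congr_fun h x; simpa using this
  have hconj : ∀ σ : K →+* ℝ,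
      ComplexEmbedding.conjugate (Complex.ofRealHom.comp σ) = Complex.ofRealHom.comp σ := by
    intro σ; ext x; simp [ComplexEmbedding.conjugate, Complex.conj_ofReal]
  have hreal : ∀ σ : K →+* ℝ, ComplexEmbedding.IsReal (Complex.ofRealHom.comp σ) := by
    intro σ; rw [ComplexEmbedding.isReal_iff]; exact hconj σ
  have hmkinj : ∀ σ τ : K →+* ℝ,
      InfinitePlace.mk (Complex.ofRealHom.comp σ) = InfinitePlace.mk (Complex.ofRealHom.comp τ) →
        σ = τ := by
    intro σ τ h
    rcases mk_eq_iff.mp h with h' | h'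
    · exact hinj σ τ h'
    · exact hinj σ τ ((hconj σ).symm.trans h')
  set w0 := InfinitePlace.mk (Complex.ofRealHom.comp K.subtype) with hw0
  set w1 := InfinitePlace.mk (Complex.ofRealHom.comp σ₁) with hw1
  set w2 := InfinitePlace.mk (Complex.ofRealHom.comp σ₂) with hw2
  set w3 := InfinitePlace.mk (Complex.ofRealHom.comp σ₃) with hw3
  have hne01 : w0 ≠ w1 := fun h => hne1 (hmkinj _ _ h.symm)
  have hne02 : w0 ≠ w2 := fun h => hne2 (hmkinj _ _ h.symm)
  have hne03 : w0 ≠ w3 := fun h => hne3 (hmkinj _ _ h.symm)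
  have hne12 : w1 ≠ w2 := fun h => h12 (hmkinj _ _ h)
  have hne13 : w1 ≠ w3 := fun h => h13 (hmkinj _ _ h)
  have hne23 : w2 ≠ w3 := fun h => h23 (hmkinj _ _ h)
  have huniv : (Finset.univ : Finset (InfinitePlace K)) = {w0, w1, w2, w3} := by
    refine (Finset.eq_univ_iff_forall.mpr ?_).symm
    intro w
    simp only [Finset.mem_insert, Finset.mem_singleton]
    rcases hall (embedding w) with h | h | h | h
    · exact Or.inl (by rw [← mk_embedding w, h])
    · exact Or.inr (Or.inl (by rw [← mk_embedding w, h]))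
    · exact Or.inr (Or.inr (Or.inl (by rw [← mk_embedding w, h])))
    · exact Or.inr (Or.inr (Or.inr (by rw [← mk_embedding w, h])))
  have hmult : mult w0 = 1 ∧ mult w1 = 1 ∧ mult w2 = 1 ∧ mult w3 = 1 := by
    refine ⟨?_, ?_, ?_, ?_⟩ <;>
    · rw [mult]; rw [if_pos]; rw [isReal_mk_iff]; exact hreal _
  have hprod : ∀ u : (𝓞 K)ˣ,
      w0 (u:K) * (w1 (u:K) * (w2 (u:K) * w3 (u:K))) = 1 := by
    intro u
    have h := prod_eq_abs_norm (u : K)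
    rw [huniv, Finset.prod_insert (by simp [hne01, hne02, hne03]),
        Finset.prod_insert (by simp [hne12, hne13]),
        Finset.prod_insert (by simp [hne23]), Finset.prod_singleton,
        hmult.1, hmult.2.1, hmult.2.2.1, hmult.2.2.2] at h
    simp only [pow_one] at h
    rw [h, NumberField.Units.norm, Rat.cast_one]
  have hposu : ∀ (u : (𝓞 K)ˣ) (w : InfinitePlace K), 0 < w (u:K) :=
    fun u w => pos_iff.mpr (NumberField.Units.coe_ne_zero u)
  have hlogsum : ∀ u : (𝓞 K)ˣ,
      Real.log (w0 (u:K)) + Real.log (w1 (u:K)) + Real.log (w2 (u:K))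
        + Real.log (w3 (u:K)) = 0 := by
    intro u
    have h0 := ne_of_gt (hposu u w0)
    have h1 := ne_of_gt (hposu u w1)
    have h2 := ne_of_gt (hposu u w2)
    have h3 := ne_of_gt (hposu u w3)
    have := congrArg Real.log (hprod u)
    rw [Real.log_mul h0 (by positivity), Real.log_mul h1 (by positivity),
        Real.log_mul h2 h3, Real.log_one] at this
    linarith
  obtain ⟨u0, hu0⟩ := NumberField.Units.dirichletUnitTheorem.exists_unit K w0
  obtain ⟨u1, hu1⟩ := NumberField.Units.dirichletUnitTheorem.exists_unit K w1
  set a0 := Real.log (w0 (u0:K)) with ha0d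
  set a1 := Real.log (w1 (u0:K)) with ha1d
  set a2 := Real.log (w2 (u0:K)) with ha2d
  set a3 := Real.log (w3 (u0:K)) with ha3d
  set b0 := Real.log (w0 (u1:K)) with hb0d
  set b1 := Real.log (w1 (u1:K)) with hb1d
  set b2 := Real.log (w2 (u1:K)) with hb2d
  set b3 := Real.log (w3 (u1:K)) with hb3d
  obtain ⟨m, n, hmpos, hnpos, c1, c2, c3, c4⟩ :=
    choose_mn a0 a1 a2 a3 b0 b1 b2 b3 (hlogsum u0) (hlogsum u1)
      (hu0 w1 (Ne.symm hne01)) (hu0 w2 (Ne.symm hne02)) (hu0 w3 (Ne.symm hne03))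
      (hu1 w0 hne01) (hu1 w2 (Ne.symm hne12)) (hu1 w3 (Ne.symm hne13))
  set U : (𝓞 K)ˣ := u0 ^ m * u1 ^ n with hU
  set α : K := (U : K) with hα
  have hαeq : α = ((u0:K)) ^ m * ((u1:K)) ^ n := by
    rw [hα, hU]; push_cast; ring
  -- values of places at α
  have hval : ∀ w : InfinitePlace K, w α =
      Real.exp (m * Real.log (w (u0:K)) + n * Real.log (w (u1:K))) := by
    intro w
    rw [hαeq, map_mul, map_pow, map_pow,
      ← Real.exp_log (hposu u0 w), ← Real.exp_log (hposu u1 w),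
      ← Real.exp_nat_mul, ← Real.exp_nat_mul, ← Real.exp_add,
      Real.exp_log (hposu u0 w), Real.exp_log (hposu u1 w)]
  have hz0 : w0 α = Real.exp (m * a0 + n * b0) := hval w0
  have hz1 : w1 α = Real.exp (m * a1 + n * b1) := hval w1
  have hz2 : w2 α = Real.exp (m * a2 + n * b2) := hval w2
  have hz3 : w3 α = Real.exp (m * a3 + n * b3) := hval w3
  -- absolute value identities
  have habs0 : ∀ x : K, w0 x = |(x : ℝ)| := by
    intro x
    rw [hw0, InfinitePlace.apply]
    simp [Complex.norm_real]
  have habs1 : ∀ x : K, w1 x = |σ₁ x| := by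
    intro x; rw [hw1, InfinitePlace.apply]; simp [Complex.norm_real]
  have habs2 : ∀ x : K, w2 x = |σ₂ x| := by
    intro x; rw [hw2, InfinitePlace.apply]; simp [Complex.norm_real]
  have habs3 : ∀ x : K, w3 x = |σ₃ x| := by
    intro x; rw [hw3, InfinitePlace.apply]; simp [Complex.norm_real]
  -- positivity of z2 z3 negativity
  have hmr : (0:ℝ) < (m:ℝ) := by exact_mod_cast hmpos
  have hnr : (0:ℝ) < (n:ℝ) := by exact_mod_cast hnpos
  have hz2neg : (m:ℝ) * a2 + n * b2 < 0 := by
    have t1 : (m:ℝ) * a2 < 0 := mul_neg_of_pos_of_neg hmr (hu0 w2 (Ne.symm hne02))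
    have t2 : (n:ℝ) * b2 < 0 := mul_neg_of_pos_of_neg hnr (hu1 w2 (Ne.symm hne12))
    linarith
  have hz3neg : (m:ℝ) * a3 + n * b3 < 0 := by
    have t1 : (m:ℝ) * a3 < 0 := mul_neg_of_pos_of_neg hmr (hu0 w3 (Ne.symm hne03))
    have t2 : (n:ℝ) * b3 < 0 := mul_neg_of_pos_of_neg hnr (hu1 w3 (Ne.symm hne13))
    linarith
  have hzsum : ((m:ℝ) * a0 + n * b0) + (m * a1 + n * b1) + (m * a2 + n * b2)
      + (m * a3 + n * b3) = 0 := by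
    have h1 := hlogsum u0
    have h2 := hlogsum u1
    linear_combination (m:ℝ) * h1 + (n:ℝ) * h2
  have hz01pos : 0 < ((m:ℝ) * a0 + n * b0) + (m * a1 + n * b1) := by linarith
  refine ⟨α, NumberField.Units.coe_ne_zero U, ?_, ?_, ?_, ?_, ?_, ?_, ?_, ?_, ?_⟩
  · exact RingOfIntegers.isIntegral_coe (U : 𝓞 K)
  · have hinv : α⁻¹ = (((U⁻¹ : (𝓞 K)ˣ) : 𝓞 K) : K) := by
      refine (inv_eq_of_mul_eq_one_right ?_)
      rw [hα, ← map_mul]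
      norm_cast
      simp
    rw [hinv]
    exact RingOfIntegers.isIntegral_coe _
  · rw [← habs0, ← habs1, hz0, hz1]
    exact Real.exp_lt_exp.mpr c2
  · rw [← habs1, hz1, ← Real.exp_zero]
    exact Real.exp_lt_exp.mpr c1
  · rw [← habs2, hz2, ← Real.exp_zero]
    exact Real.exp_lt_exp.mpr hz2neg
  · rw [← habs3, hz3, ← Real.exp_zero]
    exact Real.exp_lt_exp.mpr hz3neg
  · rw [abs_mul, ← habs0, ← habs1, hz0, hz1, ← Real.exp_add]
    intro h
    rw [Real.exp_eq_one_iff] at h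
    linarith
  · rw [abs_mul, ← habs0, ← habs2, hz0, hz2, ← Real.exp_add]
    intro h
    rw [Real.exp_eq_one_iff] at h
    exact c3 h
  · rw [abs_mul, ← habs0, ← habs3, hz0, hz3, ← Real.exp_add]
    intro h
    rw [Real.exp_eq_one_iff] at h
    exact c4 h
end

section
/- Let α be an algebraic number of degree 4 with conjugates α₁,α₂,α₃,α₄ satisfying |α₁| = |α₂| > |α₃| = |α₄| (totally imaginary case). If α₁α₃ = α₂α₄, then α₁α₃ is not a Galois conjugate of α₁α₂. -/
open Polynomial

theorem not_conjugate_of_cross_products_equal (α : ℂ) (hα : IsAlgebraic ℚ α)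
    (α₁ α₂ α₃ α₄ : ℂ)
    (hroots : ((minpoly ℚ α).map (algebraMap ℚ ℂ)).roots = {α₁, α₂, α₃, α₄})
    (h12 : ‖α₁‖ = ‖α₂‖) (h23 : ‖α₂‖ > ‖α₃‖) (h34 : ‖α₃‖ = ‖α₄‖)
    (hcross : α₁ * α₃ = α₂ * α₄) :
    (Polynomial.aeval (α₁ * α₃)) (minpoly ℚ (α₁ * α₂)) ≠ 0 := by
  intro h0
  set p := minpoly ℚ α with hp
  have hint_α : IsIntegral ℚ α := hα.isIntegral
  have hp0 : p ≠ 0 := minpoly.ne_zero hint_α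
  have hpm : p.Monic := minpoly.monic hint_α
  set f := algebraMap ℚ ℂ with hf
  have hmap0 : p.map f ≠ 0 := (Polynomial.map_ne_zero_iff f.injective).mpr hp0
  -- each αᵢ is integral
  have haev : ∀ x : ℂ, x ∈ ({α₁, α₂, α₃, α₄} : Multiset ℂ) → IsIntegral ℚ x := by
    intro x hx
    have hx' : x ∈ (p.map f).roots := by rw [hroots]; exact hx
    have hroot : (p.map f).IsRoot x := isRoot_of_mem_roots hx'
    have : (Polynomial.aeval x) p = 0 := by
      rw [aeval_def, eval₂_eq_eval_map]; exact hroot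
    exact isAlgebraic_iff_isIntegral.mp ⟨p, hp0, this⟩
  have hi1 : IsIntegral ℚ α₁ := haev α₁ (by simp)
  have hi2 : IsIntegral ℚ α₂ := haev α₂ (by simp)
  have hi3 : IsIntegral ℚ α₃ := haev α₃ (by simp)
  -- product of the roots is rational
  have hsplits : (p.map f).Splits := by
    exact IsAlgClosed.splits (p.map f)
  have hcard : (p.map f).roots.card = 4 := by rw [hroots]; rfl
  have hdeg : (p.map f).natDegree = 4 := by
    have h := hsplits.natDegree_eq_card_roots
    rwa [hcard] at h
  have hcoeff := hsplits.coeff_zero_eq_prod_roots_of_monic (hpm.map f)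
  rw [hdeg, hroots] at hcoeff
  have hq : (f (p.coeff 0) : ℂ) = α₁ * α₂ * α₃ * α₄ := by
    rw [← Polynomial.coeff_map, hcoeff]
    simp only [Multiset.insert_eq_cons, Multiset.prod_cons, Multiset.prod_singleton]
    ring
  set q : ℚ := p.coeff 0 with hqdef
  -- (α₁α₃)² = q
  have hsq13 : (α₁ * α₃) ^ 2 = f q := by
    rw [hq]; rw [sq, mul_comm α₂ α₄] at *
    calc α₁ * α₃ * (α₁ * α₃) = α₁ * α₃ * (α₄ * α₂) := by rw [← hcross]
    _ = α₁ * α₂ * α₃ * α₄ := by ring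
  -- α₁α₃ is a root of X² - C q
  set g : Polynomial ℚ := Polynomial.X ^ 2 - Polynomial.C q with hg
  have hg13 : (Polynomial.aeval (α₁ * α₃)) g = 0 := by
    simp [hg, hsq13]
  -- minpoly (α₁α₃) = minpoly (α₁α₂)
  have hi12 : IsIntegral ℚ (α₁ * α₂) := hi1.mul hi2
  have hirr : Irreducible (minpoly ℚ (α₁ * α₂)) := minpoly.irreducible hi12
  have heqmin := minpoly.eq_of_irreducible_of_monic hirr h0 (minpoly.monic hi12)
  -- so minpoly (α₁α₂) divides g, hence (α₁α₂)² = q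
  have hdvd : minpoly ℚ (α₁ * α₂) ∣ g := heqmin ▸ minpoly.dvd ℚ (α₁ * α₃) hg13
  obtain ⟨c, hc⟩ := hdvd
  have hg12 : (Polynomial.aeval (α₁ * α₂)) g = 0 := by
    rw [hc, map_mul, minpoly.aeval, zero_mul]
  have hsq12 : (α₁ * α₂) ^ 2 = f q := by
    have := hg12
    simp [hg, sub_eq_zero] at this
    exact this
  -- take norms
  have hnorm : ‖α₁ * α₂‖ ^ 2 = ‖α₁ * α₃‖ ^ 2 := by
    rw [← norm_pow, ← norm_pow, hsq12, hsq13]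
  rw [norm_mul, norm_mul, h12] at hnorm
  have ha : 0 < ‖α₂‖ := lt_of_le_of_lt (norm_nonneg α₃) h23
  have key : 0 < ‖α₂‖ * ‖α₂‖ * ((‖α₂‖ - ‖α₃‖) * (‖α₂‖ + ‖α₃‖)) :=
    mul_pos (mul_pos ha ha)
      (mul_pos (sub_pos.mpr h23) (by linarith [norm_nonneg α₃]))
  nlinarith [key]
end

section
/- Let K/ℚ be a totally real Galois extension of degree 6 with Gal(K/ℚ) ≅ C₆, generated by σ. If α is an algebraic unit in K with |α| > |σ⁵(α)| > |σ(α)| > 1 > |σ⁴(α)| > |σ²(α)| > |σ³(α)|, then β = M(α) = |α σ⁵(α) σ(α)| is an algebraic unit whose conjugates satisfy the same distribution |β| > |σ⁵(β)| > |σ(β)| > 1 > |σ⁴(β)| > |σ²(β)| > |σ³(β)|; consequently α is a wandering point under iteration of M. -/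
open Polynomial

lemma minpoly_rat_eq (c : ℂ) (h : IsIntegral ℤ c) :
    minpoly ℚ c = (minpoly ℤ c).map (algebraMap ℤ ℚ) := by
  have := minpoly.isIntegrallyClosed_eq_field_fractions ℚ ℂ (S := ℂ) h
  simpa using this

lemma intMinpoly_eq_or (c : ℂ) (h : IsIntegral ℤ c) :
    intMinpoly c = minpoly ℤ c ∨ intMinpoly c = -(minpoly ℤ c) := by
  have hmono : (minpoly ℤ c).Monic := minpoly.monic h
  have hprim : (minpoly ℤ c).IsPrimitive := hmono.isPrimitive
  obtain ⟨b, hb⟩ := IsLocalization.integerNormalization_map_to_map (nonZeroDivisors ℤ)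
    (minpoly ℚ c)
  have hbq : IsLocalization.integerNormalization (nonZeroDivisors ℤ) (minpoly ℚ c)
      = C (b : ℤ) * minpoly ℤ c := by
    have hinj : Function.Injective (algebraMap ℤ ℚ) := fun x y hxy => by exact_mod_cast hxy
    apply Polynomial.map_injective _ hinj
    rw [hb, minpoly_rat_eq c h, Polynomial.map_mul, Polynomial.map_C]
    ext n
    simp [Polynomial.coeff_smul, Polynomial.coeff_C_mul, mul_comm]
  have hb0 : (b : ℤ) ≠ 0 := nonZeroDivisors.coe_ne_zero b
  have hC0 : (C (b : ℤ)) ≠ 0 := by simpa using hb0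
  have hcont : (IsLocalization.integerNormalization (nonZeroDivisors ℤ)
      (minpoly ℚ c)).content = |(b : ℤ)| := by
    rw [hbq, Polynomial.content_C_mul, hprim.content_eq_one, mul_one, Int.abs_eq_normalize]
  have hdecomp : C (b : ℤ) * minpoly ℤ c
      = C |(b : ℤ)| * (IsLocalization.integerNormalization (nonZeroDivisors ℤ)
        (minpoly ℚ c)).primPart := by
    rw [← hcont, ← Polynomial.eq_C_content_mul_primPart, hbq]
  rcases abs_choice (b : ℤ) with habs | habs
  · left
    rw [habs] at hdecomp
    exact (mul_left_cancel₀ hC0 hdecomp).symm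
  · right
    rw [habs, Polynomial.C_neg, neg_mul, ← mul_neg] at hdecomp
    have := mul_left_cancel₀ hC0 hdecomp
    show _ = -(minpoly ℤ c)
    rw [this, neg_neg]
    rfl

lemma intMinpoly_leadingCoeff (c : ℂ) (h : IsIntegral ℤ c) :
    ((intMinpoly c).leadingCoeff.natAbs : ℝ) = 1 := by
  have hmono : (minpoly ℤ c).Monic := minpoly.monic h
  rcases intMinpoly_eq_or c h with he | he <;>
    simp [he, Polynomial.leadingCoeff_neg, hmono.leadingCoeff]

lemma intMinpoly_roots (c : ℂ) (h : IsIntegral ℤ c) :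
    ((intMinpoly c).map (Int.castRingHom ℂ)).roots
      = ((minpoly ℚ c).map (algebraMap ℚ ℂ)).roots := by
  have hmap : (minpoly ℤ c).map (Int.castRingHom ℂ)
      = (minpoly ℚ c).map (algebraMap ℚ ℂ) := by
    rw [minpoly_rat_eq c h, Polynomial.map_map]
    congr 1
  rcases intMinpoly_eq_or c h with he | he <;>
    simp [he, hmap, Polynomial.roots_neg]

lemma mahlerM_eq_roots (c : ℂ) (h : IsIntegral ℤ c) :
    mahlerM c = (((minpoly ℚ c).map (algebraMap ℚ ℂ)).roots.map (fun z => max 1 ‖z‖)).prod := by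
  rw [mahlerM, intMinpoly_leadingCoeff c h, intMinpoly_roots c h, one_mul]

lemma norm_abs_one (K : IntermediateField ℚ ℝ) [FiniteDimensional ℚ K] [IsGalois ℚ K]
    (h6 : Module.finrank ℚ K = 6) (σ : K ≃ₐ[ℚ] K) (hσ : orderOf σ = 6)
    (x : K) (hx0 : x ≠ 0) (hint : IsIntegral ℤ x) (hintinv : IsIntegral ℤ x⁻¹) :
    ∏ i ∈ Finset.range 6, |(((σ ^ i) x : K) : ℝ)| = 1 := by
  have hcard : Fintype.card (K ≃ₐ[ℚ] K) = 6 := by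
    rw [← Nat.card_eq_fintype_card, IsGalois.card_aut_eq_finrank, h6]
  have hbij : Function.Bijective (fun i : Fin 6 => σ ^ (i : ℕ)) := by
    rw [Fintype.bijective_iff_injective_and_card]
    refine ⟨fun i j hij => ?_, by simp [hcard]⟩
    have := pow_inj_mod.mp hij
    rw [hσ, Nat.mod_eq_of_lt i.isLt, Nat.mod_eq_of_lt j.isLt] at this
    exact Fin.ext this
  have hprod : ∏ i : Fin 6, ((σ ^ (i : ℕ)) x) = ∏ τ : K ≃ₐ[ℚ] K, τ x :=
    Fintype.prod_bijective _ hbij _ _ (fun i => rfl)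
  have hnorm := Algebra.norm_eq_prod_automorphisms ℚ (L := K) x
  -- norm is ±1
  have hqint : IsIntegral ℤ (Algebra.norm ℚ x) := Algebra.isIntegral_norm ℚ hint
  have hqint' : IsIntegral ℤ (Algebra.norm ℚ x⁻¹) := Algebra.isIntegral_norm ℚ hintinv
  obtain ⟨m, hm⟩ := IsIntegrallyClosed.isIntegral_iff.mp hqint
  obtain ⟨n, hn⟩ := IsIntegrallyClosed.isIntegral_iff.mp hqint'
  have hmul : Algebra.norm ℚ x * Algebra.norm ℚ x⁻¹ = 1 := by
    rw [← map_mul, mul_inv_cancel₀ hx0, map_one]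
  have hmn : m * n = 1 := by
    have : ((m * n : ℤ) : ℚ) = ((1 : ℤ) : ℚ) := by
      push_cast
      rw [show ((m:ℚ)) = Algebra.norm ℚ x from by exact_mod_cast hm,
        show ((n:ℚ)) = Algebra.norm ℚ x⁻¹ from by exact_mod_cast hn, hmul]
    exact_mod_cast this
  have hm1 : m = 1 ∨ m = -1 := Int.isUnit_iff.mp (IsUnit.of_mul_eq_one _ hmn)
  -- the product of all the real absolute values
  have key : ∏ i ∈ Finset.range 6, (((σ ^ i) x : K) : ℝ) = ((m : ℚ) : ℝ) := by
    have h1 : ((∏ i ∈ Finset.range 6, (σ ^ i) x : K) : ℝ)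
        = ∏ i ∈ Finset.range 6, (((σ ^ i) x : K) : ℝ) := by
      push_cast
      rfl
    rw [← h1]
    have h2 : (∏ i ∈ Finset.range 6, (σ ^ i) x : K) = algebraMap ℚ K (Algebra.norm ℚ x) := by
      rw [hnorm, ← hprod, ← Fin.prod_univ_eq_prod_range (fun i => (σ ^ i) x) 6]
    rw [h2, ← hm, eq_intCast]
    have : (((m : ℚ) : K) : ℝ) = ((m : ℚ) : ℝ) := by push_cast; ring
    rw [show algebraMap ℚ K ((m : ℤ) : ℚ) = (((m:ℤ):ℚ) : K) from rfl]
    exact_mod_cast this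
  rw [← Finset.abs_prod, key]
  rcases hm1 with h | h <;> simp [h]

section
variable (K : IntermediateField ℚ ℝ)

lemma minpoly_complex_eq (x : K) :
    minpoly ℚ (((x : ℝ) : ℂ)) = minpoly ℚ x := by
  have h2 : minpoly ℚ (((x : ℝ) : ℂ)) = minpoly ℚ ((x : ℝ)) :=
    minpoly.algebraMap_eq (algebraMap ℝ ℂ).injective (x : ℝ)
  have h1 : minpoly ℚ ((x : ℝ)) = minpoly ℚ x :=
    minpoly.algebraMap_eq (algebraMap K ℝ).injective x
  rw [h2, h1]

lemma conj_is_root (σ : K ≃ₐ[ℚ] K) (x : K) :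
    Polynomial.aeval (((σ x : K) : ℝ) : ℂ) (minpoly ℚ x) = 0 := by
  have h : minpoly ℚ (σ x) = minpoly ℚ x := minpoly.algEquiv_eq σ x
  rw [← h]
  have : ((((σ x : K) : ℝ)) : ℂ) = algebraMap ℝ ℂ (algebraMap K ℝ (σ x)) := rfl
  rw [this, Polynomial.aeval_algebraMap_apply, Polynomial.aeval_algebraMap_apply,
    minpoly.aeval, map_zero, map_zero]

variable [FiniteDimensional ℚ K]

lemma roots_eq_six (h6 : Module.finrank ℚ K = 6) (σ : K ≃ₐ[ℚ] K) (x : K)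
    (hnd : ({(((x : ℝ)) : ℂ), ((((σ x : K) : ℝ)) : ℂ), (((((σ^2) x : K) : ℝ)) : ℂ),
      (((((σ^3) x : K) : ℝ)) : ℂ), (((((σ^4) x : K) : ℝ)) : ℂ),
      (((((σ^5) x : K) : ℝ)) : ℂ)} : Multiset ℂ).Nodup) :
    ((minpoly ℚ (((x : ℝ) : ℂ))).map (algebraMap ℚ ℂ)).roots
      = ({(((x : ℝ)) : ℂ), ((((σ x : K) : ℝ)) : ℂ), (((((σ^2) x : K) : ℝ)) : ℂ),
      (((((σ^3) x : K) : ℝ)) : ℂ), (((((σ^4) x : K) : ℝ)) : ℂ),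
      (((((σ^5) x : K) : ℝ)) : ℂ)} : Multiset ℂ) := by
  set S : Multiset ℂ := {(((x : ℝ)) : ℂ), ((((σ x : K) : ℝ)) : ℂ), (((((σ^2) x : K) : ℝ)) : ℂ),
      (((((σ^3) x : K) : ℝ)) : ℂ), (((((σ^4) x : K) : ℝ)) : ℂ),
      (((((σ^5) x : K) : ℝ)) : ℂ)} with hS
  have hxint : IsIntegral ℚ x := IsIntegral.of_finite ℚ x
  have hp0 : minpoly ℚ x ≠ 0 := minpoly.ne_zero hxint
  rw [minpoly_complex_eq]
  have hmem : ∀ z ∈ S, z ∈ ((minpoly ℚ x).map (algebraMap ℚ ℂ)).roots := by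
    intro z hz
    rw [Polynomial.mem_roots_map hp0, ← Polynomial.aeval_def]
    have : ∀ τ : K ≃ₐ[ℚ] K, Polynomial.aeval ((((τ x : K) : ℝ)) : ℂ) (minpoly ℚ x) = 0 :=
      fun τ => conj_is_root K τ x
    fin_cases hz
    · simpa using this 1
    · exact this σ
    · exact this (σ^2)
    · exact this (σ^3)
    · exact this (σ^4)
    · exact this (σ^5)
  have hle : S ≤ ((minpoly ℚ x).map (algebraMap ℚ ℂ)).roots := by
    rw [Multiset.le_iff_count]
    intro z
    by_cases hz : z ∈ S
    · rw [Multiset.count_eq_one_of_mem hnd hz]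
      exact Multiset.one_le_count_iff_mem.mpr (hmem z hz)
    · rw [Multiset.count_eq_zero_of_notMem hz]
      exact Nat.zero_le _
  have hcard : Multiset.card ((minpoly ℚ x).map (algebraMap ℚ ℂ)).roots ≤ Multiset.card S := by
    have h1 := Polynomial.card_roots' ((minpoly ℚ x).map (algebraMap ℚ ℂ))
    have h2 : ((minpoly ℚ x).map (algebraMap ℚ ℂ)).natDegree ≤ (minpoly ℚ x).natDegree :=
      Polynomial.natDegree_map_le
    have h3 : (minpoly ℚ x).natDegree ≤ 6 := by
      have := minpoly.natDegree_le (A := ℚ) x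
      rwa [h6] at this
    have h4 : Multiset.card S = 6 := by simp [hS]
    omega
  exact (Multiset.eq_of_le_of_card_le hle hcard).symm

end

lemma sixchain (a b c d e f : ℝ) (hd0 : 0 < d)
    (h1 : a > f) (h2 : f > b) (h3 : b > 1) (h4 : 1 > e) (h5 : e > c) (h6 : c > d)
    (hn : a * b * c * d * e * f = 1) :
    a * f * b > f * e * a ∧ f * e * a > a * b * c ∧ a * b * c > 1 ∧ 1 > e * d * f ∧
      e * d * f > b * c * d ∧ b * c * d > c * d * e ∧ a * f * b > a := by
  have hc0 : 0 < c := lt_trans hd0 h6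
  have he0 : 0 < e := lt_trans hc0 h5
  have hb0 : (0:ℝ) < b := by linarith
  have hf0 : (0:ℝ) < f := by linarith
  have ha0 : (0:ℝ) < a := by linarith
  have hab : (0:ℝ) < a * b := mul_pos ha0 hb0
  have habc0 : (0:ℝ) < a * b * c := mul_pos hab hc0
  have hde : (0:ℝ) < d * e := mul_pos hd0 he0
  have hdef0 : (0:ℝ) < d * e * f := mul_pos hde hf0
  have s1 : d * e * f < c * e * f := by nlinarith [mul_pos he0 hf0]
  have s2 : c * e * f < c * b * f := by nlinarith [mul_pos hc0 hf0]
  have s3 : c * b * f < c * b * a := by nlinarith [mul_pos hc0 hb0]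
  have hdlta : d * e * f < a * b * c := by nlinarith [s1, s2, s3]
  have habc : a * b * c > 1 := by nlinarith
  have hedf : 1 > e * d * f := by nlinarith
  have hfe : f * e > b * c := by nlinarith
  refine ⟨by nlinarith [mul_pos hf0 ha0], by nlinarith, habc, hedf,
    by nlinarith, by nlinarith [mul_pos hc0 hd0], by nlinarith⟩

def GoodSix (K : IntermediateField ℚ ℝ) (σ : K ≃ₐ[ℚ] K) (x : K) : Prop :=
  x ≠ 0 ∧ IsIntegral ℤ x ∧ IsIntegral ℤ x⁻¹ ∧
  (|(x : ℝ)| > |(((σ ^ 5) x : K) : ℝ)| ∧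
   |(((σ ^ 5) x : K) : ℝ)| > |((σ x : K) : ℝ)| ∧
   |((σ x : K) : ℝ)| > 1 ∧
   (1:ℝ) > |(((σ ^ 4) x : K) : ℝ)| ∧
   |(((σ ^ 4) x : K) : ℝ)| > |(((σ ^ 2) x : K) : ℝ)| ∧
   |(((σ ^ 2) x : K) : ℝ)| > |(((σ ^ 3) x : K) : ℝ)|)

section
variable (K : IntermediateField ℚ ℝ) [FiniteDimensional ℚ K] [IsGalois ℚ K]

lemma conj_integral (σ : K ≃ₐ[ℚ] K) (x : K) (h : IsIntegral ℤ x) :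
    IsIntegral ℤ (σ x) :=
  h.map (AlgEquiv.restrictScalars ℤ σ)

set_option maxHeartbeats 2000000 in
lemma key_step (h6 : Module.finrank ℚ K = 6) (σ : K ≃ₐ[ℚ] K) (hσ : orderOf σ = 6)
    (x : K) (hx : GoodSix K σ x) :
    mahlerM ((x : ℝ) : ℂ) = |((x * (σ ^ 5) x * σ x : K) : ℝ)| ∧
    GoodSix K σ (x * (σ ^ 5) x * σ x) ∧
    |((x * (σ ^ 5) x * σ x : K) : ℝ)| > |(x : ℝ)| := by
  obtain ⟨hx0, hint, hintinv, hd1, hd2, hd3, hd4, hd5, hd6⟩ := hx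
  have hσ6 : σ ^ 6 = 1 := by rw [← hσ]; exact pow_orderOf_eq_one σ
  have hpowmod : ∀ n : ℕ, σ ^ (n % 6) = σ ^ n := by
    intro n
    conv_rhs => rw [← pow_mod_orderOf]
    rw [hσ]
  have hcomp : ∀ k j : ℕ, (σ ^ k) ((σ ^ j) x) = (σ ^ ((k + j) % 6)) x := by
    intro k j
    rw [hpowmod, pow_add, AlgEquiv.mul_apply]
  have e15 : σ ((σ^5) x) = x := by simpa [pow_one] using hcomp 1 5
  have e11 : σ (σ x) = (σ^2) x := by simpa [pow_one] using hcomp 1 1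
  have e55 : (σ^5) ((σ^5) x) = (σ^4) x := by simpa using hcomp 5 5
  have e51 : (σ^5) (σ x) = x := by simpa [pow_one] using hcomp 5 1
  have e45 : (σ^4) ((σ^5) x) = (σ^3) x := by simpa using hcomp 4 5
  have e41 : (σ^4) (σ x) = (σ^5) x := by simpa [pow_one] using hcomp 4 1
  have e25 : (σ^2) ((σ^5) x) = σ x := by simpa [pow_one] using hcomp 2 5
  have e21 : (σ^2) (σ x) = (σ^3) x := by simpa [pow_one] using hcomp 2 1
  have e35 : (σ^3) ((σ^5) x) = (σ^2) x := by simpa using hcomp 3 5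
  have e31 : (σ^3) (σ x) = (σ^4) x := by simpa [pow_one] using hcomp 3 1
  have hb5 : (σ^5) (x * (σ^5) x * σ x) = (σ^5) x * (σ^4) x * x := by
    rw [map_mul, map_mul, e55, e51]
  have hb1 : σ (x * (σ^5) x * σ x) = σ x * x * (σ^2) x := by
    rw [map_mul, map_mul, e15, e11]
  have hb4 : (σ^4) (x * (σ^5) x * σ x) = (σ^4) x * (σ^3) x * (σ^5) x := by
    rw [map_mul, map_mul, e45, e41]
  have hb2 : (σ^2) (x * (σ^5) x * σ x) = (σ^2) x * σ x * (σ^3) x := by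
    rw [map_mul, map_mul, e25, e21]
  have hb3 : (σ^3) (x * (σ^5) x * σ x) = (σ^3) x * (σ^2) x * (σ^4) x := by
    rw [map_mul, map_mul, e35, e31]
  have habs : ∀ y z w : K, |((y * z * w : K) : ℝ)| = |(y : ℝ)| * |(z : ℝ)| * |(w : ℝ)| := by
    intro y z w
    push_cast
    rw [abs_mul, abs_mul]
  set av := |(x : ℝ)| with hav
  set bv := |((σ x : K) : ℝ)| with hbv
  set cv := |(((σ^2) x : K) : ℝ)| with hcv
  set dv := |(((σ^3) x : K) : ℝ)| with hdv
  set ev := |(((σ^4) x : K) : ℝ)| with hev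
  set fv := |(((σ^5) x : K) : ℝ)| with hfv
  have hconj_ne : ∀ k : ℕ, (σ^k) x ≠ 0 := by
    intro k hk
    exact hx0 ((σ^k).injective (by rw [hk, map_zero]))
  have hdv0 : 0 < dv := by
    rw [hdv, abs_pos]
    exact_mod_cast hconj_ne 3
  have hn6 := norm_abs_one K h6 σ hσ x hx0 hint hintinv
  rw [Finset.prod_range_succ, Finset.prod_range_succ, Finset.prod_range_succ,
    Finset.prod_range_succ, Finset.prod_range_succ, Finset.prod_range_one] at hn6
  simp only [pow_zero, pow_one, AlgEquiv.one_apply] at hn6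
  rw [← hav, ← hbv, ← hcv, ← hdv, ← hev, ← hfv] at hn6
  obtain ⟨c1, c2, c3, c4, c5, c6, c7⟩ :=
    sixchain av bv cv dv ev fv hdv0 hd1 hd2 hd3 hd4 hd5 hd6 hn6
  -- positivity facts
  have hdc : dv < cv := hd6
  have hce : cv < ev := hd5
  have he1 : ev < 1 := hd4
  have h1b : (1:ℝ) < bv := hd3
  have hbf : bv < fv := hd2
  have hfa : fv < av := hd1
  -- distinctness of the six complex conjugates
  have hneq : ∀ y z : K, |((y : K) : ℝ)| ≠ |((z : K) : ℝ)| →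
      (((y : ℝ)) : ℂ) ≠ (((z : ℝ)) : ℂ) := by
    intro y z h hc
    exact h (by rw [Complex.ofReal_inj.mp hc])
  have hnd : ({(((x : ℝ)) : ℂ), ((((σ x : K) : ℝ)) : ℂ), (((((σ^2) x : K) : ℝ)) : ℂ),
      (((((σ^3) x : K) : ℝ)) : ℂ), (((((σ^4) x : K) : ℝ)) : ℂ),
      (((((σ^5) x : K) : ℝ)) : ℂ)} : Multiset ℂ).Nodup := by
    have n01 := hneq x (σ x) (by rw [← hav, ← hbv]; intro h; linarith [h.ge, h.le])
    have n02 := hneq x ((σ^2) x) (by rw [← hav, ← hcv]; intro h; linarith [h.ge])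
    have n03 := hneq x ((σ^3) x) (by rw [← hav, ← hdv]; intro h; linarith [h.ge])
    have n04 := hneq x ((σ^4) x) (by rw [← hav, ← hev]; intro h; linarith [h.ge])
    have n05 := hneq x ((σ^5) x) (by rw [← hav, ← hfv]; intro h; linarith [h.ge])
    have n12 := hneq (σ x) ((σ^2) x) (by rw [← hbv, ← hcv]; intro h; linarith [h.ge])
    have n13 := hneq (σ x) ((σ^3) x) (by rw [← hbv, ← hdv]; intro h; linarith [h.ge])
    have n14 := hneq (σ x) ((σ^4) x) (by rw [← hbv, ← hev]; intro h; linarith [h.ge])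
    have n15 := hneq (σ x) ((σ^5) x) (by rw [← hbv, ← hfv]; intro h; linarith [h.ge])
    have n23 := hneq ((σ^2) x) ((σ^3) x) (by rw [← hcv, ← hdv]; intro h; linarith [h.ge])
    have n24 := hneq ((σ^2) x) ((σ^4) x) (by rw [← hcv, ← hev]; intro h; linarith [h.ge])
    have n25 := hneq ((σ^2) x) ((σ^5) x) (by rw [← hcv, ← hfv]; intro h; linarith [h.ge])
    have n34 := hneq ((σ^3) x) ((σ^4) x) (by rw [← hdv, ← hev]; intro h; linarith [h.ge])
    have n35 := hneq ((σ^3) x) ((σ^5) x) (by rw [← hdv, ← hfv]; intro h; linarith [h.ge])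
    have n45 := hneq ((σ^4) x) ((σ^5) x) (by rw [← hev, ← hfv]; intro h; linarith [h.ge])
    simp only [Multiset.insert_eq_cons, Multiset.nodup_cons, Multiset.mem_cons,
      Multiset.mem_singleton, Multiset.nodup_singleton, and_true, not_or]
    exact ⟨⟨n01, n02, n03, n04, n05⟩, ⟨n12, n13, n14, n15⟩, ⟨n23, n24, n25⟩, ⟨n34, n35⟩, n45⟩
  -- the Mahler measure computation
  have hcint : IsIntegral ℤ (((x : ℝ)) : ℂ) := by
    have h1 : IsIntegral ℤ ((x : ℝ)) := hint.map (IsScalarTower.toAlgHom ℤ K ℝ)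
    exact h1.map (IsScalarTower.toAlgHom ℤ ℝ ℂ)
  have hmah : mahlerM ((x : ℝ) : ℂ) = |((x * (σ ^ 5) x * σ x : K) : ℝ)| := by
    rw [mahlerM_eq_roots _ hcint, roots_eq_six K h6 σ x hnd]
    simp only [Multiset.insert_eq_cons, Multiset.map_cons, Multiset.prod_cons,
      Multiset.map_singleton, Multiset.prod_singleton, Complex.norm_real, Real.norm_eq_abs]
    rw [← hav, ← hbv, ← hcv, ← hdv, ← hev, ← hfv]
    rw [max_eq_right (by linarith : (1:ℝ) ≤ av), max_eq_right (by linarith : (1:ℝ) ≤ bv),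
      max_eq_left (by linarith : cv ≤ 1), max_eq_left (by linarith : dv ≤ 1),
      max_eq_left (by linarith : ev ≤ 1), max_eq_right (by linarith : (1:ℝ) ≤ fv)]
    rw [habs, ← hav, ← hfv, ← hbv]
    ring
  refine ⟨hmah, ⟨?_, ?_, ?_, ?_, ?_, ?_, ?_, ?_, ?_⟩, ?_⟩
  · exact mul_ne_zero (mul_ne_zero hx0 (hconj_ne 5)) (by simpa [pow_one] using hconj_ne 1)
  · exact (hint.mul (conj_integral K (σ^5) x hint)).mul (conj_integral K σ x hint)
  · rw [mul_inv, mul_inv, ← map_inv₀, ← map_inv₀]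
    exact (hintinv.mul (conj_integral K (σ^5) x⁻¹ hintinv)).mul (conj_integral K σ x⁻¹ hintinv)
  · rw [hb5, habs, habs, ← hav, ← hbv, ← hev, ← hfv]
    linarith [c1]
  · rw [hb5, hb1, habs, habs, ← hav, ← hbv, ← hcv, ← hev, ← hfv]
    nlinarith [c2]
  · rw [hb1, habs, ← hav, ← hbv, ← hcv]
    nlinarith [c3]
  · rw [hb4, habs, ← hdv, ← hev, ← hfv]
    nlinarith [c4]
  · rw [hb4, hb2, habs, habs, ← hbv, ← hcv, ← hdv, ← hev, ← hfv]
    nlinarith [c5]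
  · rw [hb2, hb3, habs, habs, ← hbv, ← hcv, ← hdv, ← hev]
    nlinarith [c6]
  · rw [habs, ← hav, ← hbv, ← hfv]
    linarith [c7]

end

section
variable (K : IntermediateField ℚ ℝ) [FiniteDimensional ℚ K] [IsGalois ℚ K]

omit [FiniteDimensional ℚ K] [IsGalois ℚ K] in
lemma GoodSix.neg' (σ : K ≃ₐ[ℚ] K) (x : K) (h : GoodSix K σ x) : GoodSix K σ (-x) := by
  obtain ⟨h0, h1, h2, h3⟩ := h
  refine ⟨neg_ne_zero.mpr h0, h1.neg, by rw [inv_neg]; exact h2.neg, ?_⟩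
  simpa [abs_neg] using h3

noncomputable def stepK (σ : K ≃ₐ[ℚ] K) (y : K) : K :=
  if ((y * (σ^5) y * σ y : K) : ℝ) < 0 then -(y * (σ^5) y * σ y) else y * (σ^5) y * σ y

omit [FiniteDimensional ℚ K] [IsGalois ℚ K] in
lemma stepK_coe (σ : K ≃ₐ[ℚ] K) (y : K) :
    ((stepK K σ y : K) : ℝ) = |((y * (σ^5) y * σ y : K) : ℝ)| := by
  rw [stepK]
  split_ifs with h
  · push_cast
    exact (abs_of_neg h).symm
  · exact (abs_of_nonneg (not_lt.mp h)).symm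

lemma stepK_good (h6 : Module.finrank ℚ K = 6) (σ : K ≃ₐ[ℚ] K) (hσ : orderOf σ = 6)
    (y : K) (h : GoodSix K σ y) : GoodSix K σ (stepK K σ y) := by
  have := (key_step K h6 σ hσ y h).2.1
  rw [stepK]
  split_ifs
  · exact GoodSix.neg' K σ _ this
  · exact this

lemma stepK_mahler (h6 : Module.finrank ℚ K = 6) (σ : K ≃ₐ[ℚ] K) (hσ : orderOf σ = 6)
    (y : K) (h : GoodSix K σ y) : mahlerC ((y : ℝ) : ℂ) = (((stepK K σ y : K) : ℝ) : ℂ) := by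
  rw [mahlerC, (key_step K h6 σ hσ y h).1, stepK_coe]

lemma stepK_grow (h6 : Module.finrank ℚ K = 6) (σ : K ≃ₐ[ℚ] K) (hσ : orderOf σ = 6)
    (y : K) (h : GoodSix K σ y) : |((stepK K σ y : K) : ℝ)| > |(y : ℝ)| := by
  rw [stepK_coe, abs_abs]
  exact (key_step K h6 σ hσ y h).2.2

end

theorem cyclic_sextic_totally_real_wandering (K : IntermediateField ℚ ℝ)
    [FiniteDimensional ℚ K] [IsGalois ℚ K] (h6 : Module.finrank ℚ K = 6)
    (σ : K ≃ₐ[ℚ] K) (hσ : orderOf σ = 6)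
    (α : K) (hα0 : α ≠ 0) (hint : IsIntegral ℤ α) (hintinv : IsIntegral ℤ α⁻¹)
    (hd1 : |(α : ℝ)| > |(((σ ^ 5) α : K) : ℝ)|)
    (hd2 : |(((σ ^ 5) α : K) : ℝ)| > |((σ α : K) : ℝ)|)
    (hd3 : |((σ α : K) : ℝ)| > 1)
    (hd4 : (1 : ℝ) > |(((σ ^ 4) α : K) : ℝ)|)
    (hd5 : |(((σ ^ 4) α : K) : ℝ)| > |(((σ ^ 2) α : K) : ℝ)|)
    (hd6 : |(((σ ^ 2) α : K) : ℝ)| > |(((σ ^ 3) α : K) : ℝ)|) :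
    (mahlerM ((α : ℝ) : ℂ) = |((α * (σ ^ 5) α * σ α : K) : ℝ)|) ∧
    (IsIntegral ℤ (α * (σ ^ 5) α * σ α) ∧ IsIntegral ℤ (α * (σ ^ 5) α * σ α)⁻¹) ∧
    (|((α * (σ ^ 5) α * σ α : K) : ℝ)| >
        |(((σ ^ 5) (α * (σ ^ 5) α * σ α) : K) : ℝ)| ∧
      |(((σ ^ 5) (α * (σ ^ 5) α * σ α) : K) : ℝ)| >
        |((σ (α * (σ ^ 5) α * σ α) : K) : ℝ)| ∧
      |((σ (α * (σ ^ 5) α * σ α) : K) : ℝ)| > 1 ∧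
      (1 : ℝ) > |(((σ ^ 4) (α * (σ ^ 5) α * σ α) : K) : ℝ)| ∧
      |(((σ ^ 4) (α * (σ ^ 5) α * σ α) : K) : ℝ)| >
        |(((σ ^ 2) (α * (σ ^ 5) α * σ α) : K) : ℝ)| ∧
      |(((σ ^ 2) (α * (σ ^ 5) α * σ α) : K) : ℝ)| >
        |(((σ ^ 3) (α * (σ ^ 5) α * σ α) : K) : ℝ)|) ∧
    (Set.range fun m : ℕ => mahlerC^[m] ((α : ℝ) : ℂ)).Infinite := by
  have hgood : GoodSix K σ α := ⟨hα0, hint, hintinv, hd1, hd2, hd3, hd4, hd5, hd6⟩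
  obtain ⟨hm, hgood', hgrow⟩ := key_step K h6 σ hσ α hgood
  refine ⟨hm, ⟨hgood'.2.1, hgood'.2.2.1⟩, hgood'.2.2.2, ?_⟩
  have hiter : ∀ m : ℕ, GoodSix K σ ((stepK K σ)^[m] α) ∧
      mahlerC^[m] ((α : ℝ) : ℂ) = (((((stepK K σ)^[m] α : K)) : ℝ) : ℂ) := by
    intro m
    induction m with
    | zero => exact ⟨hgood, rfl⟩
    | succ n ih =>
      obtain ⟨hg, he⟩ := ih
      constructor
      · rw [Function.iterate_succ_apply']
        exact stepK_good K h6 σ hσ _ hg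
      · rw [Function.iterate_succ_apply', Function.iterate_succ_apply', he,
          stepK_mahler K h6 σ hσ _ hg]
  have hmono : StrictMono (fun m => |((((stepK K σ)^[m] α : K)) : ℝ)|) := by
    apply strictMono_nat_of_lt_succ
    intro n
    have hg := (hiter n).1
    have := stepK_grow K h6 σ hσ _ hg
    rw [Function.iterate_succ_apply']
    exact this
  have hinj : Function.Injective (fun m : ℕ => mahlerC^[m] ((α : ℝ) : ℂ)) := by
    intro m n h
    apply hmono.injective
    have h1 := (hiter m).2
    have h2 := (hiter n).2
    simp only at h
    rw [h1, h2] at h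
    have : (((((stepK K σ)^[m] α : K)) : ℝ)) = (((((stepK K σ)^[n] α : K)) : ℝ)) :=
      Complex.ofReal_inj.mp h
    simp only [this]
  exact Set.infinite_range_of_injective hinj
end
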